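/- Let P be a Poisson conformal superalgebra and let L be a parity-graded H-submodule of P closed under the λ-bracket, i.e., [L_λ L] ⊆ L[λ]. Then (i) the map ρ_λ(a, x) = [a_λ x], for a ∈ L and x ∈ P, is a conformal representation of L on P, and (ii) the parity-preserving sesqui-linear map φ_λ(a, x) = λ (a_λ x) satisfies the cocycle equation φ_{λ+μ}([a_λ b], x) = φ_λ(a, ρ_μ(b, x)) + ρ_λ(a, φ_μ(b, x)) − (−1)^{|a||b|} φ_μ(b, ρ_λ(a, x)) − (−1)^{|a||b|} ρ_μ(b, φ_λ(a, x)) for homogeneous a, b ∈ L and all x ∈ P. -/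
import Mathlib


open Finsupp

noncomputable section

variable (k : Type) [Field k] [CharZero k]

section Base

variable {M N : Type} [AddCommGroup M] [Module k M] [AddCommGroup N] [Module k N]

/-- Multiplication by `λ` on `M[λ] := ℕ →₀ M`. -/
def lamMul : (ℕ →₀ M) →ₗ[k] (ℕ →₀ M) := Finsupp.lmapDomain M k Nat.succ

/-- Apply a linear map to every coefficient of a polynomial. -/
def cw (f : M →ₗ[k] N) : (ℕ →₀ M) →ₗ[k] (ℕ →₀ N) := Finsupp.mapRange.linearMap f

/-- The constant-polynomial embedding `M → M[λ]`. -/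
def cst : M →ₗ[k] (ℕ →₀ M) := Finsupp.lsingle 0

/-- Multiplication by `λ` on `M[λ,μ] := ℕ →₀ (ℕ →₀ M)` (outer variable `μ`, inner `λ`). -/
def lamMul2 : (ℕ →₀ (ℕ →₀ M)) →ₗ[k] (ℕ →₀ (ℕ →₀ M)) := cw k (lamMul k)

/-- Multiplication by `μ` on `M[λ,μ]`. -/
def muMul2 : (ℕ →₀ (ℕ →₀ M)) →ₗ[k] (ℕ →₀ (ℕ →₀ M)) := Finsupp.lmapDomain (ℕ →₀ M) k Nat.succ

/-- The constant embedding `M → M[λ,μ]`. -/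
def cst2 : M →ₗ[k] (ℕ →₀ (ℕ →₀ M)) := (cst k).comp (cst k)

/-- Interchange of the two variables of `M[λ,μ]`. -/
def swapVar : (ℕ →₀ (ℕ →₀ M)) →ₗ[k] (ℕ →₀ (ℕ →₀ M)) :=
  Finsupp.lsum k fun n => cw k (Finsupp.lsingle n)

/-- The substitution `λ ↦ -∂-λ` on `M[λ]`, where `∂` acts on `M` via `D`. -/
def substNeg (D : M →ₗ[k] M) : (ℕ →₀ M) →ₗ[k] (ℕ →₀ M) :=
  Finsupp.lsum k fun n => ((-(cw k D) - lamMul k) ^ n) ∘ₗ cst k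

/-- The substitution `ν ↦ λ+μ` from `M[ν]` to `M[λ,μ]`. -/
def substAdd : (ℕ →₀ M) →ₗ[k] (ℕ →₀ (ℕ →₀ M)) :=
  Finsupp.lsum k fun n => ((lamMul2 k + muMul2 k) ^ n) ∘ₗ cst2 k

end Base
section Ops

variable {A B C V W L P : Type} [AddCommGroup A] [Module k A] [AddCommGroup B] [Module k B]
  [AddCommGroup C] [Module k C] [AddCommGroup V] [Module k V] [AddCommGroup W] [Module k W]
  [AddCommGroup L] [Module k L] [AddCommGroup P] [Module k P]

/-- `P_λ(a, Q_μ(b, c))`, an element of `W[λ,μ]` (outer variable `μ`, inner `λ`). -/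
def opComp (F : A →ₗ[k] C →ₗ[k] (ℕ →₀ W)) (G : B →ₗ[k] V →ₗ[k] (ℕ →₀ C))
    (a : A) (b : B) (c : V) : ℕ →₀ (ℕ →₀ W) := cw k (F a) (G b c)

/-- `Q_μ(b, P_λ(a, c))`, an element of `W[λ,μ]` (outer variable `μ`, inner `λ`). -/
def opCompSwap (F : B →ₗ[k] C →ₗ[k] (ℕ →₀ W)) (G : A →ₗ[k] V →ₗ[k] (ℕ →₀ C))
    (b : B) (a : A) (c : V) : ℕ →₀ (ℕ →₀ W) := swapVar k (cw k (F b) (G a c))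

/-- `Q_{λ+μ}(P_λ(a, b), c)`, an element of `W[λ,μ]` (outer variable `μ`, inner `λ`). -/
def opSubst (F : A →ₗ[k] B →ₗ[k] (ℕ →₀ C)) (G : C →ₗ[k] V →ₗ[k] (ℕ →₀ W))
    (a : A) (b : B) (c : V) : ℕ →₀ (ℕ →₀ W) :=
  Finsupp.lsum k (fun n => ((lamMul2 k (M := W)) ^ n) ∘ₗ substAdd k) (cw k (G.flip c) (F a b))

end Ops

/-- The Koszul sign `(-1)^{|a||b|}` attached to parities `i`, `j`. -/
def sgn (i j : ZMod 2) : ℤ := if i = 1 ∧ j = 1 then -1 else 1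

section Structures

variable {A B C L V P : Type} [AddCommGroup A] [Module k A] [AddCommGroup B] [Module k B]
  [AddCommGroup C] [Module k C]
  [AddCommGroup L] [Module k L] [AddCommGroup V] [Module k V] [AddCommGroup P] [Module k P]

/-- A `ℤ₂`-graded module over `H = k[∂]`, where `∂` acts via `D`:
the two graded components are complementary and `∂`-invariant. -/
structure IsGradedHMod (D : L →ₗ[k] L) (par : ZMod 2 → Submodule k L) : Prop where
  sup_eq_top : par 0 ⊔ par 1 = ⊤
  inf_eq_bot : par 0 ⊓ par 1 = ⊥
  map_d : ∀ i a, a ∈ par i → D a ∈ par i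

/-- Sesqui-linearity of a pairing `A ⊗ B → C[λ]` with respect to the `∂`-actions
`DA`, `DB`, `DC`: `F(∂a, b) = -λ F(a,b)` and `F(a, ∂b) = (∂+λ) F(a,b)`. -/
structure IsSesqui (DA : A →ₗ[k] A) (DB : B →ₗ[k] B) (DC : C →ₗ[k] C)
    (F : A →ₗ[k] B →ₗ[k] (ℕ →₀ C)) : Prop where
  dleft : ∀ a b, F (DA a) b = -(lamMul k (F a b))
  dright : ∀ a b, F a (DB b) = cw k DC (F a b) + lamMul k (F a b)

/-- A Lie conformal superalgebra structure on the `H`-module `L` (with `∂` acting via `D`)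
with `ℤ₂`-grading `par` and `λ`-bracket `Br`. -/
structure IsLieConfSuper (D : L →ₗ[k] L) (par : ZMod 2 → Submodule k L)
    (Br : L →ₗ[k] L →ₗ[k] (ℕ →₀ L)) : Prop where
  graded : IsGradedHMod k D par
  sesqui : IsSesqui k D D D Br
  parity : ∀ i j a b, a ∈ par i → b ∈ par j → ∀ n, Br a b n ∈ par (i + j)
  skew : ∀ i j a b, a ∈ par i → b ∈ par j → Br a b = -(sgn i j • substNeg k D (Br b a))
  jacobi : ∀ i j a b c, a ∈ par i → b ∈ par j →
    opComp k Br Br a b c = opSubst k Br Br a b c + sgn i j • opCompSwap k Br Br b a c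

/-- A Poisson conformal superalgebra structure on the `H`-module `P`, with `λ`-bracket `Br`
and conformally associative, supercommutative product `Ml`, linked by the conformal
Leibniz rule. -/
structure IsPoissonConfSuper (D : P →ₗ[k] P) (par : ZMod 2 → Submodule k P)
    (Br Ml : P →ₗ[k] P →ₗ[k] (ℕ →₀ P)) : Prop where
  lie : IsLieConfSuper k D par Br
  mul_sesqui : IsSesqui k D D D Ml
  mul_parity : ∀ i j a b, a ∈ par i → b ∈ par j → ∀ n, Ml a b n ∈ par (i + j)
  assoc : ∀ a b c, opComp k Ml Ml a b c = opSubst k Ml Ml a b c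
  comm : ∀ i j a b, a ∈ par i → b ∈ par j → Ml a b = sgn i j • substNeg k D (Ml b a)
  leibniz : ∀ i j a b c, a ∈ par i → b ∈ par j →
    opComp k Br Ml a b c = opSubst k Br Ml a b c + sgn i j • opCompSwap k Ml Br b a c

/-- A conformal representation of the Lie conformal superalgebra `(L, D, par, Br)` on the
`ℤ₂`-graded `H`-module `(V, DV, parV)`. -/
structure IsConfRep (D : L →ₗ[k] L) (par : ZMod 2 → Submodule k L)
    (Br : L →ₗ[k] L →ₗ[k] (ℕ →₀ L)) (DV : V →ₗ[k] V) (parV : ZMod 2 → Submodule k V)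
    (ρ : L →ₗ[k] V →ₗ[k] (ℕ →₀ V)) : Prop where
  sesqui : IsSesqui k D DV DV ρ
  parity : ∀ i j a x, a ∈ par i → x ∈ parV j → ∀ n, ρ a x n ∈ parV (i + j)
  jacobi : ∀ i j a b x, a ∈ par i → b ∈ par j →
    opComp k ρ ρ a b x - sgn i j • opCompSwap k ρ ρ b a x = opSubst k Br ρ a b x

/-- Finiteness of an `H`-module: it is generated, as a `k[∂]`-module, by finitely
many elements. -/
def IsHFinite (DV : V →ₗ[k] V) : Prop :=
  ∃ s : Finset V, ∀ W : Submodule k V, (∀ x ∈ W, DV x ∈ W) → (↑s : Set V) ⊆ ↑W → W = ⊤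

/-- The Lie conformal superalgebra `(L, D, par, Br)` admits a finite faithful conformal
representation. -/
def HasFFR (D : L →ₗ[k] L) (par : ZMod 2 → Submodule k L)
    (Br : L →ₗ[k] L →ₗ[k] (ℕ →₀ L)) : Prop :=
  ∃ (V : Type) (_ : AddCommGroup V) (_ : Module k V) (DV : V →ₗ[k] V)
    (parV : ZMod 2 → Submodule k V) (ρ : L →ₗ[k] V →ₗ[k] (ℕ →₀ V)),
    IsGradedHMod k DV parV ∧ IsConfRep k D par Br DV parV ρ ∧ IsHFinite k DV ∧
      ∀ a : L, a ≠ 0 → ρ a ≠ 0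

/-- `ρ` (defined on the ambient space `P`) restricts to a conformal representation of the
Lie conformal subalgebra `L ≤ P` (with ambient `λ`-bracket `Br`) on `(V, DV, parV)`. -/
def IsConfRepOn (D : P →ₗ[k] P) (par : ZMod 2 → Submodule k P)
    (Br : P →ₗ[k] P →ₗ[k] (ℕ →₀ P)) (L : Submodule k P)
    (DV : V →ₗ[k] V) (parV : ZMod 2 → Submodule k V)
    (ρ : P →ₗ[k] V →ₗ[k] (ℕ →₀ V)) : Prop :=
  (∀ a ∈ L, ∀ x, ρ (D a) x = -(lamMul k (ρ a x))) ∧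
  (∀ a ∈ L, ∀ x, ρ a (DV x) = cw k DV (ρ a x) + lamMul k (ρ a x)) ∧
  (∀ i j, ∀ a ∈ L ⊓ par i, ∀ x ∈ parV j, ∀ n, ρ a x n ∈ parV (i + j)) ∧
  (∀ i j, ∀ a ∈ L ⊓ par i, ∀ b ∈ L ⊓ par j, ∀ x,
    opComp k ρ ρ a b x - sgn i j • opCompSwap k ρ ρ b a x = opSubst k Br ρ a b x)

end Structures
section Extension

variable {A B W V : Type} [AddCommGroup A] [Module k A] [AddCommGroup B] [Module k B]
  [AddCommGroup W] [Module k W] [AddCommGroup V] [Module k V]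

/-- The sesqui-linear extension of a pairing `F : A ⊗ B → W[λ]` to a pairing
`(H ⊗ A) ⊗ (H ⊗ B) → W[λ]` (where `H ⊗ A` is realized as `ℕ →₀ A`, the index recording
the power of `∂`): `F(∂^n a, ∂^m b) = (-λ)^n (∂+λ)^m F(a, b)`, where `∂` acts on `W[λ]`
coefficientwise via `DW`. -/
def extSesqui (DW : W →ₗ[k] W) (F : A →ₗ[k] B →ₗ[k] (ℕ →₀ W)) :
    (ℕ →₀ A) →ₗ[k] (ℕ →₀ B) →ₗ[k] (ℕ →₀ W) :=
  Finsupp.lsum k fun n =>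
    (Finsupp.lsum (R := k) k).toLinearMap.comp <| LinearMap.pi fun m =>
      (LinearMap.llcomp k B (ℕ →₀ W) (ℕ →₀ W)
        (((-(lamMul k (M := W))) ^ n) * ((cw k DW + lamMul k) ^ m))).comp F

/-- The action of `∂` on `H ⊗ V`, realized as `ℕ →₀ V`. -/
def DD (V : Type) [AddCommGroup V] [Module k V] : (ℕ →₀ V) →ₗ[k] (ℕ →₀ V) :=
  Finsupp.lmapDomain V k Nat.succ

/-- The canonical embedding `V → H ⊗ V`. -/
def emb (V : Type) [AddCommGroup V] [Module k V] : V →ₗ[k] (ℕ →₀ V) :=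
  Finsupp.lsingle 0

/-- A grading of `V` lifts coefficientwise to a grading of `H ⊗ V = ℕ →₀ V`. -/
def liftPar {V : Type} [AddCommGroup V] [Module k V] (par : ZMod 2 → Submodule k V)
    (i : ZMod 2) : Submodule k (ℕ →₀ V) where
  carrier := { f | ∀ n, f n ∈ par i }
  add_mem' := fun hf hg n => by
    simpa only [Finsupp.add_apply] using add_mem (hf n) (hg n)
  zero_mem' := fun n => by simp
  smul_mem' := fun c f hf n => by
    simpa only [Finsupp.smul_apply] using Submodule.smul_mem _ c (hf n)

end Extension

section Super

variable (p : Type) [NonUnitalRing p] [Module k p] [SMulCommClass k p p] [IsScalarTower k p p]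

/-- An (ordinary) Poisson superalgebra structure on the `ℤ₂`-graded associative
supercommutative algebra `p`, with super Lie bracket `br`. -/
structure IsPoissonSuper (par : ZMod 2 → Submodule k p) (br : p →ₗ[k] p →ₗ[k] p) : Prop where
  sup_eq_top : par 0 ⊔ par 1 = ⊤
  inf_eq_bot : par 0 ⊓ par 1 = ⊥
  mul_mem : ∀ i j (a b : p), a ∈ par i → b ∈ par j → a * b ∈ par (i + j)
  mul_scomm : ∀ i j (a b : p), a ∈ par i → b ∈ par j → a * b = sgn i j • (b * a)
  br_mem : ∀ i j a b, a ∈ par i → b ∈ par j → br a b ∈ par (i + j)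
  br_skew : ∀ i j a b, a ∈ par i → b ∈ par j → br a b = -(sgn i j • br b a)
  br_jacobi : ∀ i j a b c, a ∈ par i → b ∈ par j →
    br a (br b c) = br (br a b) c + sgn i j • br b (br a c)
  leibniz : ∀ i j a b c, a ∈ par i → b ∈ par j →
    br a (b * c) = br a b * c + sgn i j • (b * br a c)

/-- An even derivation of the Poisson superalgebra `(p, par, br)`. -/
structure IsEvenDerivation (par : ZMod 2 → Submodule k p) (br : p →ₗ[k] p →ₗ[k] p)
    (d : p →ₗ[k] p) : Prop where
  even : ∀ i a, a ∈ par i → d a ∈ par i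
  map_mul : ∀ a b, d (a * b) = d a * b + a * d b
  map_br : ∀ a b, d (br a b) = br (d a) b + br a (d b)

/-- Base pairing `a ⊗ b ↦ a b` (constant in `λ`) for the current/quadratic constructions. -/
def curMul0 : p →ₗ[k] p →ₗ[k] (ℕ →₀ (ℕ →₀ p)) :=
  (LinearMap.mul k p).compr₂ ((cst k).comp (emb k p))

/-- Base pairing `a ⊗ b ↦ {a, b}` (constant in `λ`) for the current construction. -/
def curBr0 (br : p →ₗ[k] p →ₗ[k] p) : p →ₗ[k] p →ₗ[k] (ℕ →₀ (ℕ →₀ p)) :=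
  br.compr₂ ((cst k).comp (emb k p))

/-- Base pairing `a ⊗ b ↦ {a, b} + ∂ (d a · b) + λ d(a b)` of the Poisson conformal
superalgebra `L(p, d)`. -/
def qua0 (br : p →ₗ[k] p →ₗ[k] p) (d : p →ₗ[k] p) : p →ₗ[k] p →ₗ[k] (ℕ →₀ (ℕ →₀ p)) :=
  br.compr₂ ((cst k).comp (emb k p))
    + ((LinearMap.mul k p).comp d).compr₂ ((cst k).comp ((DD k p).comp (emb k p)))
    + ((LinearMap.mul k p).compr₂ d).compr₂ ((lamMul k).comp ((cst k).comp (emb k p)))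

/-- The multiplication `(a ∂^n)_λ (b ∂^m) = (-λ)^n (∂+λ)^m (a b)` on `H ⊗ p`. -/
def LpdMul : (ℕ →₀ p) →ₗ[k] (ℕ →₀ p) →ₗ[k] (ℕ →₀ (ℕ →₀ p)) :=
  extSesqui k (DD k p) (curMul0 k p)

/-- The `λ`-bracket of the current Poisson conformal superalgebra `Cur p`. -/
def CurBr (br : p →ₗ[k] p →ₗ[k] p) : (ℕ →₀ p) →ₗ[k] (ℕ →₀ p) →ₗ[k] (ℕ →₀ (ℕ →₀ p)) :=
  extSesqui k (DD k p) (curBr0 k p br)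

/-- The `λ`-bracket of the Poisson conformal superalgebra `L(p, d)`. -/
def LpdBr (br : p →ₗ[k] p →ₗ[k] p) (d : p →ₗ[k] p) :
    (ℕ →₀ p) →ₗ[k] (ℕ →₀ p) →ₗ[k] (ℕ →₀ (ℕ →₀ p)) :=
  extSesqui k (DD k p) (qua0 k p br d)

/-- The twisted action `ρ̂_λ(a, u) = [a_λ u] + λ (a_λ u)` on `L(p, d)`. -/
def LpdRho (br : p →ₗ[k] p →ₗ[k] p) (d : p →ₗ[k] p) :
    (ℕ →₀ p) →ₗ[k] (ℕ →₀ p) →ₗ[k] (ℕ →₀ (ℕ →₀ p)) :=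
  LpdBr k p br d + (LpdMul k p).compr₂ (lamMul k)

end Super

set_option linter.unusedSectionVars false

section AuxBase

variable {M N W : Type} [AddCommGroup M] [Module k M] [AddCommGroup N] [Module k N]
  [AddCommGroup W] [Module k W]

/-- Abbreviation for multiplication by `λ + μ` on `M[λ,μ]`. -/
def LMsum : (ℕ →₀ (ℕ →₀ M)) →ₗ[k] (ℕ →₀ (ℕ →₀ M)) := lamMul2 k + muMul2 k

/-- Abbreviation for the operator `-∂ - λ` on `M[λ]`. -/
def negSub (D : M →ₗ[k] M) : (ℕ →₀ M) →ₗ[k] (ℕ →₀ M) := -(cw k D) - lamMul k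

lemma lamMul_single (n : ℕ) (x : M) :
    lamMul k (Finsupp.single n x) = Finsupp.single (n + 1) x := by
  simp [lamMul, Finsupp.lmapDomain_apply, Finsupp.mapDomain_single]

lemma cw_single (f : M →ₗ[k] N) (n : ℕ) (x : M) :
    cw k f (Finsupp.single n x) = Finsupp.single n (f x) := by
  simp [cw]

lemma cw_comp_apply (f : N →ₗ[k] W) (g : M →ₗ[k] N) (v : ℕ →₀ M) :
    cw k (f ∘ₗ g) v = cw k f (cw k g v) := by
  have h := Finsupp.mapRange.linearMap_comp (R := k) (α := ℕ) f g
  exact LinearMap.congr_fun h v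

lemma cst_apply (x : M) : cst k x = Finsupp.single 0 x := rfl

lemma cst2_apply (x : M) : cst2 k x = Finsupp.single 0 (Finsupp.single 0 x) := rfl

lemma muMul2_single (m : ℕ) (v : ℕ →₀ M) :
    muMul2 k (Finsupp.single m v) = Finsupp.single (m + 1) v := by
  simp [muMul2, Finsupp.lmapDomain_apply, Finsupp.mapDomain_single]

lemma lamMul2_single (m : ℕ) (v : ℕ →₀ M) :
    lamMul2 k (Finsupp.single m v) = Finsupp.single m (lamMul k v) := by
  simp [lamMul2, cw]

lemma swapVar_single (m n : ℕ) (x : M) :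
    swapVar k (Finsupp.single m (Finsupp.single n x))
      = Finsupp.single n (Finsupp.single m x) := by
  simp [swapVar, cw]

lemma swapVar_swapVar (v : ℕ →₀ (ℕ →₀ M)) : swapVar k (swapVar k v) = v := by
  have h : (swapVar k (M := M)) ∘ₗ swapVar k = LinearMap.id := by
    apply Finsupp.lhom_ext'
    intro m
    apply Finsupp.lhom_ext
    intro n x
    simp [swapVar_single]
  exact LinearMap.congr_fun h v

lemma swapVar_lamMul2 (v : ℕ →₀ (ℕ →₀ M)) :
    swapVar k (lamMul2 k v) = muMul2 k (swapVar k v) := by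
  have h : (swapVar k (M := M)) ∘ₗ lamMul2 k = muMul2 k ∘ₗ swapVar k := by
    apply Finsupp.lhom_ext'
    intro m
    apply Finsupp.lhom_ext
    intro n x
    simp [lamMul2_single, lamMul_single, swapVar_single, muMul2_single]
  exact LinearMap.congr_fun h v

lemma swapVar_muMul2 (v : ℕ →₀ (ℕ →₀ M)) :
    swapVar k (muMul2 k v) = lamMul2 k (swapVar k v) := by
  have h : (swapVar k (M := M)) ∘ₗ muMul2 k = lamMul2 k ∘ₗ swapVar k := by
    apply Finsupp.lhom_ext'
    intro m
    apply Finsupp.lhom_ext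
    intro n x
    simp [lamMul2_single, lamMul_single, swapVar_single, muMul2_single]
  exact LinearMap.congr_fun h v

lemma lamMul2_muMul2 (v : ℕ →₀ (ℕ →₀ M)) :
    lamMul2 k (muMul2 k v) = muMul2 k (lamMul2 k v) := by
  have h : (lamMul2 k (M := M)) ∘ₗ muMul2 k = muMul2 k ∘ₗ lamMul2 k := by
    apply Finsupp.lhom_ext'
    intro m
    apply Finsupp.lhom_ext
    intro n x
    simp [lamMul2_single, muMul2_single]
  exact LinearMap.congr_fun h v

lemma commute_lamMul2_LM :
    Commute (lamMul2 k (M := M)) (LMsum k) :=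
  (Commute.refl _).add_right (LinearMap.ext fun v => lamMul2_muMul2 k v)

lemma commute_muMul2_lamMul2 :
    Commute (muMul2 k (M := M)) (lamMul2 k) :=
  LinearMap.ext fun v => (lamMul2_muMul2 k v).symm

lemma lamMul2_pow_LM (n : ℕ) (w : ℕ →₀ (ℕ →₀ M)) :
    ((lamMul2 k (M := M)) ^ n) (LMsum k w) = LMsum k (((lamMul2 k (M := M)) ^ n) w) := by
  have h := (commute_lamMul2_LM k (M := M)).pow_left n
  simpa only [Module.End.mul_apply] using LinearMap.congr_fun h w

lemma muMul2_lamMul2_pow (n : ℕ) (w : ℕ →₀ (ℕ →₀ M)) :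
    ((lamMul2 k (M := M)) ^ n) (muMul2 k w) = muMul2 k (((lamMul2 k (M := M)) ^ n) w) := by
  have h := ((commute_muMul2_lamMul2 k (M := M)).symm).pow_left n
  simpa only [Module.End.mul_apply] using LinearMap.congr_fun h w

lemma substAdd_single (n : ℕ) (x : M) :
    substAdd k (Finsupp.single n x) = ((LMsum k (M := M)) ^ n) (cst2 k x) := by
  simp [substAdd, LMsum]

lemma substNeg_single (D : M →ₗ[k] M) (n : ℕ) (x : M) :
    substNeg k D (Finsupp.single n x) = ((negSub k D) ^ n) (Finsupp.single 0 x) := by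
  simp [substNeg, negSub]
  rfl

lemma substAdd_lamMul (v : ℕ →₀ M) :
    substAdd k (lamMul k v) = LMsum k (substAdd k v) := by
  have h : (substAdd k (M := M)) ∘ₗ lamMul k = LMsum k ∘ₗ substAdd k := by
    apply Finsupp.lhom_ext
    intro n x
    simp only [LinearMap.comp_apply, lamMul_single, substAdd_single]
    rw [pow_succ', Module.End.mul_apply]
  exact LinearMap.congr_fun h v

lemma swapVar_LM (w : ℕ →₀ (ℕ →₀ M)) :
    swapVar k (LMsum k w) = LMsum k (swapVar k w) := by
  simp only [LMsum, LinearMap.add_apply, map_add, swapVar_lamMul2, swapVar_muMul2]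
  abel

lemma swapVar_substAdd (v : ℕ →₀ M) : swapVar k (substAdd k v) = substAdd k v := by
  have h : (swapVar k (M := M)) ∘ₗ substAdd k = substAdd k := by
    apply Finsupp.lhom_ext
    intro n x
    simp only [LinearMap.comp_apply, substAdd_single]
    induction n with
    | zero =>
      simp [cst2_apply, swapVar_single]
    | succ n ih =>
      rw [pow_succ', Module.End.mul_apply, swapVar_LM, ih]
  exact LinearMap.congr_fun h v

lemma swapVar_muMul2_pow (n : ℕ) (w : ℕ →₀ (ℕ →₀ M)) :
    swapVar k (((muMul2 k (M := M)) ^ n) w) = ((lamMul2 k (M := M)) ^ n) (swapVar k w) := by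
  induction n generalizing w with
  | zero => simp
  | succ n ih =>
    rw [pow_succ', pow_succ', Module.End.mul_apply, Module.End.mul_apply,
      swapVar_muMul2, ih]

/-- The core substitution operator underlying `opSubst`. -/
def Tm (g : M →ₗ[k] (ℕ →₀ N)) : (ℕ →₀ M) →ₗ[k] (ℕ →₀ (ℕ →₀ N)) :=
  (Finsupp.lsum k fun n => ((lamMul2 k (M := N)) ^ n) ∘ₗ substAdd k) ∘ₗ cw k g

lemma Tm_single (g : M →ₗ[k] (ℕ →₀ N)) (n : ℕ) (x : M) :
    Tm k g (Finsupp.single n x) = ((lamMul2 k (M := N)) ^ n) (substAdd k (g x)) := by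
  simp [Tm, cw_single]

lemma Tm_lamMul_comp (g : M →ₗ[k] (ℕ →₀ N)) (f : ℕ →₀ M) :
    Tm k (lamMul k ∘ₗ g) f = LMsum k (Tm k g f) := by
  have h : Tm k (lamMul k ∘ₗ g) = LMsum k ∘ₗ Tm k g := by
    apply Finsupp.lhom_ext
    intro n x
    simp only [LinearMap.comp_apply, Tm_single, LinearMap.coe_comp, Function.comp_apply]
    rw [substAdd_lamMul, lamMul2_pow_LM]
  exact LinearMap.congr_fun h f

lemma Tm_dneg (D : M →ₗ[k] M) (g : M →ₗ[k] (ℕ →₀ N))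
    (hg : ∀ c, g (D c) = -(lamMul k (g c))) (h : ℕ →₀ M) :
    Tm k g (negSub k D h) = muMul2 k (Tm k g h) := by
  have heq : Tm k g ∘ₗ negSub k D = muMul2 k ∘ₗ Tm k g := by
    apply Finsupp.lhom_ext
    intro m c
    have h1 : negSub k D (Finsupp.single m c)
        = -(Finsupp.single m (D c)) - Finsupp.single (m + 1) c := by
      simp [negSub, cw_single, lamMul_single]
    simp only [LinearMap.comp_apply, h1, map_sub, map_neg, Tm_single]
    rw [hg, map_neg, map_neg, substAdd_lamMul, lamMul2_pow_LM]
    have h2 : ((lamMul2 k (M := N)) ^ (m + 1)) (substAdd k (g c))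
        = ((lamMul2 k (M := N)) ^ m) (lamMul2 k (substAdd k (g c))) := by
      rw [pow_succ, Module.End.mul_apply]
    have h3 : ((lamMul2 k (M := N)) ^ m) (lamMul2 k (substAdd k (g c)))
        = lamMul2 k (((lamMul2 k (M := N)) ^ m) (substAdd k (g c))) := by
      rw [← Module.End.mul_apply, ← pow_succ, pow_succ', Module.End.mul_apply]
    rw [h2, h3]
    simp only [LMsum, LinearMap.add_apply]
    abel
  exact LinearMap.congr_fun heq h

lemma Tm_substNeg (D : M →ₗ[k] M) (g : M →ₗ[k] (ℕ →₀ N))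
    (hg : ∀ c, g (D c) = -(lamMul k (g c))) (f : ℕ →₀ M) :
    swapVar k (Tm k g (substNeg k D f)) = Tm k g f := by
  have heq : (swapVar k) ∘ₗ (Tm k g ∘ₗ substNeg k D) = Tm k g := by
    apply Finsupp.lhom_ext
    intro n x
    simp only [LinearMap.comp_apply, substNeg_single]
    have key : ∀ (m : ℕ) (w : ℕ →₀ M),
        Tm k g (((negSub k D) ^ m) w) = ((muMul2 k (M := N)) ^ m) (Tm k g w) := by
      intro m
      induction m with
      | zero => intro w; simp
      | succ m ih =>
        intro w
        rw [pow_succ', pow_succ', Module.End.mul_apply, Module.End.mul_apply,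
          Tm_dneg k D g hg, ih]
    rw [key, Tm_single, Tm_single, pow_zero, Module.End.one_apply,
      swapVar_muMul2_pow, swapVar_substAdd]
  exact LinearMap.congr_fun heq f

lemma cw_lamMul_apply (f : M →ₗ[k] (ℕ →₀ N)) (v : ℕ →₀ M) :
    cw k f (lamMul k v) = muMul2 k (cw k f v) := by
  have h : (cw k f) ∘ₗ lamMul k = muMul2 k ∘ₗ cw k f := by
    apply Finsupp.lhom_ext
    intro n x
    simp [lamMul_single, cw_single, muMul2_single]
  exact LinearMap.congr_fun h v

end AuxBase

section AuxOps

variable {A B C V W : Type} [AddCommGroup A] [Module k A] [AddCommGroup B] [Module k B]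
  [AddCommGroup C] [Module k C] [AddCommGroup V] [Module k V] [AddCommGroup W] [Module k W]

lemma opSubst_eq_Tm (F : A →ₗ[k] B →ₗ[k] (ℕ →₀ C)) (G : C →ₗ[k] V →ₗ[k] (ℕ →₀ W))
    (a : A) (b : B) (c : V) : opSubst k F G a b c = Tm k (G.flip c) (F a b) := rfl

lemma opCompSwap_eq_swap (F : B →ₗ[k] C →ₗ[k] (ℕ →₀ W)) (G : A →ₗ[k] V →ₗ[k] (ℕ →₀ C))
    (b : B) (a : A) (c : V) :
    opCompSwap k F G b a c = swapVar k (opComp k F G b a c) := rfl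

lemma opComp_lam_left (F : A →ₗ[k] C →ₗ[k] (ℕ →₀ W)) (G : B →ₗ[k] V →ₗ[k] (ℕ →₀ C))
    (a : A) (b : B) (c : V) :
    opComp k (F.compr₂ (lamMul k)) G a b c = lamMul2 k (opComp k F G a b c) := by
  have h : (F.compr₂ (lamMul k)) a = lamMul k ∘ₗ F a := by
    apply LinearMap.ext; intro y; rfl
  show cw k ((F.compr₂ (lamMul k)) a) (G b c) = _
  rw [h, cw_comp_apply]
  rfl

lemma opComp_lam_right (F : A →ₗ[k] C →ₗ[k] (ℕ →₀ W)) (G : B →ₗ[k] V →ₗ[k] (ℕ →₀ C))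
    (a : A) (b : B) (c : V) :
    opComp k F (G.compr₂ (lamMul k)) a b c = muMul2 k (opComp k F G a b c) := by
  show cw k (F a) (lamMul k (G b c)) = _
  rw [cw_lamMul_apply]
  rfl

lemma opCompSwap_lam_left (F : B →ₗ[k] C →ₗ[k] (ℕ →₀ W)) (G : A →ₗ[k] V →ₗ[k] (ℕ →₀ C))
    (b : B) (a : A) (c : V) :
    opCompSwap k (F.compr₂ (lamMul k)) G b a c = muMul2 k (opCompSwap k F G b a c) := by
  rw [opCompSwap_eq_swap, opCompSwap_eq_swap, opComp_lam_left, swapVar_lamMul2]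

lemma opCompSwap_lam_right (F : B →ₗ[k] C →ₗ[k] (ℕ →₀ W)) (G : A →ₗ[k] V →ₗ[k] (ℕ →₀ C))
    (b : B) (a : A) (c : V) :
    opCompSwap k F (G.compr₂ (lamMul k)) b a c = lamMul2 k (opCompSwap k F G b a c) := by
  rw [opCompSwap_eq_swap, opCompSwap_eq_swap, opComp_lam_right, swapVar_muMul2]

lemma opSubst_lam (F : A →ₗ[k] B →ₗ[k] (ℕ →₀ C)) (G : C →ₗ[k] V →ₗ[k] (ℕ →₀ W))
    (a : A) (b : B) (c : V) :
    opSubst k F (G.compr₂ (lamMul k)) a b c = LMsum k (opSubst k F G a b c) := by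
  have h : (G.compr₂ (lamMul k)).flip c = lamMul k ∘ₗ G.flip c := by
    apply LinearMap.ext; intro y; rfl
  rw [opSubst_eq_Tm, h, Tm_lamMul_comp, opSubst_eq_Tm]

end AuxOps

lemma sgn_comm (i j : ZMod 2) : sgn i j = sgn j i := by
  by_cases hi : i = 1 <;> by_cases hj : j = 1 <;> simp [sgn, hi, hj]

lemma sgn_sgn_smul {α : Type*} [AddCommGroup α] (i j : ZMod 2) (v : α) :
    sgn i j • sgn i j • v = v := by
  rw [smul_smul]
  have h : sgn i j * sgn i j = 1 := by
    by_cases hi : i = 1 <;> by_cases hj : j = 1 <;> simp [sgn, hi, hj]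
  rw [h, one_smul]

set_option linter.unusedSectionVars true


/-- **Proposition (regular representation and the multiplication cocycle).**
Let `P` be a Poisson conformal superalgebra and `L ≤ P` a parity-graded `H`-submodule closed
under the `λ`-bracket. Then (i) `ρ_λ(a, x) = [a_λ x]` is a conformal representation of `L`
on `P`, and (ii) the sesqui-linear map `φ_λ(a, x) = λ (a_λ x)` satisfies the cocycle equation
`φ_{λ+μ}([a_λ b], x) = φ_λ(a, ρ_μ(b,x)) + ρ_λ(a, φ_μ(b,x))
  - (-1)^{|a||b|} φ_μ(b, ρ_λ(a,x)) - (-1)^{|a||b|} ρ_μ(b, φ_λ(a,x))`. -/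
theorem regular_representation_and_cocycle
    (P : Type) [AddCommGroup P] [Module k P]
    (D : P →ₗ[k] P) (par : ZMod 2 → Submodule k P)
    (Br Ml : P →ₗ[k] P →ₗ[k] (ℕ →₀ P))
    (hP : IsPoissonConfSuper k D par Br Ml)
    (L : Submodule k P) (hLD : ∀ a ∈ L, D a ∈ L)
    (hLgr : ∀ a ∈ L, ∃ a0 ∈ L ⊓ par 0, ∃ a1 ∈ L ⊓ par 1, a = a0 + a1)
    (hLcl : ∀ a ∈ L, ∀ b ∈ L, ∀ n, Br a b n ∈ L) :
    IsConfRepOn k D par Br L D par Br ∧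
      (∀ i j, ∀ a ∈ L ⊓ par i, ∀ b ∈ L ⊓ par j, ∀ x : P,
        opSubst k Br (Ml.compr₂ (lamMul k)) a b x
          = opComp k (Ml.compr₂ (lamMul k)) Br a b x
            + opComp k Br (Ml.compr₂ (lamMul k)) a b x
            - sgn i j • opCompSwap k (Ml.compr₂ (lamMul k)) Br b a x
            - sgn i j • opCompSwap k Br (Ml.compr₂ (lamMul k)) b a x) := by
  constructor
  · refine ⟨?_, ?_, ?_, ?_⟩
    · intro a _ x
      exact hP.lie.sesqui.dleft a x
    · intro a _ x
      exact hP.lie.sesqui.dright a x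
    · intro i j a ha x hx n
      exact hP.lie.parity i j a x (Submodule.mem_inf.mp ha).2 hx n
    · intro i j a ha b hb x
      rw [hP.lie.jacobi i j a b x (Submodule.mem_inf.mp ha).2 (Submodule.mem_inf.mp hb).2]
      abel
  · intro i j a ha b hb x
    have hai : a ∈ par i := (Submodule.mem_inf.mp ha).2
    have hbj : b ∈ par j := (Submodule.mem_inf.mp hb).2
    have hg : ∀ c, (Ml.flip x) (D c) = -(lamMul k ((Ml.flip x) c)) := fun c =>
      hP.mul_sesqui.dleft c x
    have hskew : Br b a = -(sgn j i • substNeg k D (Br a b)) :=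
      hP.lie.skew j i b a hbj hai
    have hsub : swapVar k (opSubst k Br Ml b a x)
        = -(sgn j i • opSubst k Br Ml a b x) := by
      rw [opSubst_eq_Tm, hskew]
      simp only [map_neg, map_zsmul]
      rw [Tm_substNeg k D (Ml.flip x) hg, ← opSubst_eq_Tm]
    have E1 := hP.leibniz i j a b x hai hbj
    have E2 := hP.leibniz j i b a x hbj hai
    have E2' : opCompSwap k Br Ml b a x
        = -(sgn j i • opSubst k Br Ml a b x) + sgn j i • opComp k Ml Br a b x := by
      calc opCompSwap k Br Ml b a x
          = swapVar k (opComp k Br Ml b a x) := rfl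
        _ = swapVar k (opSubst k Br Ml b a x + sgn j i • opCompSwap k Ml Br a b x) := by
            rw [E2]
        _ = swapVar k (opSubst k Br Ml b a x)
              + sgn j i • swapVar k (opCompSwap k Ml Br a b x) := by
            rw [map_add, map_zsmul]
        _ = -(sgn j i • opSubst k Br Ml a b x) + sgn j i • opComp k Ml Br a b x := by
            rw [hsub, opCompSwap_eq_swap, swapVar_swapVar]
    have hS1 : opSubst k Br Ml a b x
        = opComp k Br Ml a b x - sgn i j • opCompSwap k Ml Br b a x := by
      rw [E1]; abel
    have hS2 : opSubst k Br Ml a b x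
        = opComp k Ml Br a b x - sgn i j • opCompSwap k Br Ml b a x := by
      rw [E2', ← sgn_comm i j, smul_add, smul_neg, sgn_sgn_smul, sgn_sgn_smul]
      abel
    rw [opSubst_lam, opComp_lam_left, opComp_lam_right, opCompSwap_lam_left,
      opCompSwap_lam_right]
    have h1 : lamMul2 k (opSubst k Br Ml a b x)
        = lamMul2 k (opComp k Ml Br a b x)
          - sgn i j • lamMul2 k (opCompSwap k Br Ml b a x) := by
      rw [hS2, map_sub, map_zsmul]
    have h2 : muMul2 k (opSubst k Br Ml a b x)
        = muMul2 k (opComp k Br Ml a b x)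
          - sgn i j • muMul2 k (opCompSwap k Ml Br b a x) := by
      rw [hS1, map_sub, map_zsmul]
    calc LMsum k (opSubst k Br Ml a b x)
        = lamMul2 k (opSubst k Br Ml a b x) + muMul2 k (opSubst k Br Ml a b x) := rfl
      _ = _ := by rw [h1, h2]; abel
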